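/- (Part of Proposition 2) The product * preserves the quasi-periodicity property 2: fix n₁,…,n_h ∈ ℤ. Suppose f ∈ F_l satisfies, for every 1 ≤ i ≤ h and 1 ≤ α ≤ l_i, f(…, x_{α,i}+1, …; u) = f(…, x_{α,i}, …; u) and f(…, x_{α,i}+η, …; u) = e^{−2πi(n_i x_{α,i} + u_i − (l,δ_i)τ)} f(…, x_{α,i}, …; u), and g ∈ F_{l'} satisfies the same conditions with l replaced by l'. Then f*g satisfies these conditions with l replaced by l+l': for every i, α and every point (x; u) at which θ(x_{a,p} − x_{b,q}) ≠ 0 for all distinct x-variable slots, (f*g)(…, x_{α,i}+1, …; u) = (f*g)(…, x_{α,i}, …; u) and (f*g)(…, x_{α,i}+η, …; u) = e^{−2πi(n_i x_{α,i} + u_i − (l+l',δ_i)τ)} (f*g)(…, x_{α,i}, …; u). -/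
import Mathlib


open Complex

/-- The theta function `θ(z) = Σ_{α∈ℤ} (−1)^α e^{2πi(αz + α(α−1)η/2)}`. -/
noncomputable def theta (η : ℂ) (z : ℂ) : ℂ :=
  ∑' n : ℤ, (-1) ^ n * Complex.exp (2 * (Real.pi : ℂ) * I * (n * z + n * (n - 1) / 2 * η))

/-- The space of functions `f(x_{1,1},…,x_{l_h,h}; u_1,…,u_h)` of `l₁+⋯+l_h` variables
`x_{α,i}` (grouped into `h` groups of sizes `l i`) and `h` variables `u_i`. -/
def FF (h : ℕ) (l : Fin h → ℕ) : Type :=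
  (∀ i : Fin h, Fin (l i) → ℂ) → (Fin h → ℂ) → ℂ

/-- `f ∈ F_l` is symmetric in each group of variables `{x_{1,i},…,x_{l_i,i}}`. -/
def IsSymFF {h : ℕ} {l : Fin h → ℕ} (f : FF h l) : Prop :=
  ∀ (σ : ∀ i : Fin h, Equiv.Perm (Fin (l i))) (x : ∀ i : Fin h, Fin (l i) → ℂ)
    (u : Fin h → ℂ), f (fun i => x i ∘ σ i) u = f x u

/-- The product `f*g` of formula (2), where `d i j = (δ_i, δ_j)` are the scalar products. -/
noncomputable def starMul {h : ℕ} (η τ : ℂ) (d : Fin h → Fin h → ℂ)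
    {l l' : Fin h → ℕ} (f : FF h l) (g : FF h l') : FF h (fun i => l i + l' i) :=
  fun x u =>
    (∏ i : Fin h, ((l i).factorial * (l' i).factorial : ℂ))⁻¹ *
    ∑ σ : ∀ i : Fin h, Equiv.Perm (Fin (l i + l' i)),
      f (fun i a => x i (σ i (Fin.castAdd (l' i) a))) u *
      g (fun i b => x i (σ i (Fin.natAdd (l i) b)))
        (fun i => u i - 2 * (∑ j : Fin h, (l j : ℂ) * d j i) * τ) *
      ∏ i : Fin h, ∏ j : Fin h, ∏ a : Fin (l i), ∏ b : Fin (l' j),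
        (theta η (x i (σ i (Fin.castAdd (l' i) a)) - x j (σ j (Fin.natAdd (l j) b)) - d i j * τ) /
         theta η (x i (σ i (Fin.castAdd (l' i) a)) - x j (σ j (Fin.natAdd (l j) b))))

/-- Property 2 (quasi-periodicity) for `f ∈ F_l`, with characters `n : Fin h → ℤ`:
in each variable `x_{α,i}`, `f` is `1`-periodic and transforms under `x_{α,i} ↦ x_{α,i}+η`
by the factor `e^{−2πi(n_i x_{α,i} + u_i − (l,δ_i)τ)}`. -/
def QuasiPeriodic {h : ℕ} (η τ : ℂ) (d : Fin h → Fin h → ℂ) (n : Fin h → ℤ)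
    {l : Fin h → ℕ} (f : FF h l) : Prop :=
  ∀ (x : ∀ i : Fin h, Fin (l i) → ℂ) (u : Fin h → ℂ) (i : Fin h) (a : Fin (l i)),
    f (Function.update x i (Function.update (x i) a (x i a + 1))) u = f x u ∧
    f (Function.update x i (Function.update (x i) a (x i a + η))) u =
      Complex.exp (-(2 * (Real.pi : ℂ) * I) *
        ((n i : ℂ) * x i a + u i - (∑ j : Fin h, (l j : ℂ) * d j i) * τ)) * f x u

/-! ### Theta function quasi-periodicity -/

theorem theta_periodic (η z : ℂ) : theta η (z + 1) = theta η z := by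
  unfold theta
  refine tsum_congr fun n => ?_
  have h : 2 * (Real.pi:ℂ) * I * (n * (z+1) + n*(n-1)/2*η)
      = 2*(Real.pi:ℂ)*I*(n*z + n*(n-1)/2*η) + n*(2*(Real.pi:ℂ)*I) := by ring
  rw [h, Complex.exp_add, Complex.exp_int_mul_two_pi_mul_I, mul_one]

theorem theta_eta (η z : ℂ) :
    theta η (z + η) = -Complex.exp (-(2*(Real.pi:ℂ)*I)*z) * theta η z := by
  unfold theta
  rw [← tsum_mul_left]
  rw [← (Equiv.addRight (1:ℤ)).tsum_eq (fun n : ℤ => -Complex.exp (-(2*(Real.pi:ℂ)*I)*z) *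
      ((-1)^n * Complex.exp (2*(Real.pi:ℂ)*I*(n*z + n*(n-1)/2*η))))]
  refine tsum_congr fun n => ?_
  simp only [Equiv.coe_addRight]
  have h1 : ((-1:ℂ))^(n+1) = -((-1:ℂ))^n := by
    rw [zpow_add₀ (by norm_num : (-1:ℂ) ≠ 0), zpow_one, mul_neg_one]
  rw [h1]
  push_cast
  have h2 : ∀ A B : ℂ, -Complex.exp A * (-(-1:ℂ)^n * Complex.exp B) = (-1)^n * Complex.exp (A+B) := by
    intro A B; rw [Complex.exp_add]; ring
  rw [h2]
  congr 2
  ring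

theorem theta_periodic_sub (η z : ℂ) : theta η (z - 1) = theta η z := by
  have h := theta_periodic η (z - 1); rw [sub_add_cancel] at h; exact h.symm

theorem theta_sub_eta (η z : ℂ) :
    theta η (z - η) = -Complex.exp ((2*(Real.pi:ℂ)*I)*(z-η)) * theta η z := by
  have h := theta_eta η (z - η)
  rw [sub_add_cancel] at h
  rw [h, ← mul_assoc, neg_mul_neg, ← Complex.exp_add]
  rw [show (2*(Real.pi:ℂ)*I)*(z-η) + -(2*(Real.pi:ℂ)*I)*(z-η) = 0 by ring, Complex.exp_zero, one_mul]

theorem theta_ratio_one_left (η w y c : ℂ) :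
    theta η (w + 1 - y - c) / theta η (w + 1 - y) = theta η (w - y - c) / theta η (w - y) := by
  rw [show w+1-y-c = (w-y-c)+1 by ring, show w+1-y = (w-y)+1 by ring, theta_periodic, theta_periodic]

theorem theta_ratio_one_right (η w y c : ℂ) :
    theta η (w - (y + 1) - c) / theta η (w - (y + 1)) = theta η (w - y - c) / theta η (w - y) := by
  rw [show w-(y+1)-c = (w-y-c)-1 by ring, show w-(y+1) = (w-y)-1 by ring,
    theta_periodic_sub, theta_periodic_sub]

theorem theta_ratio_eta_left (η w y c : ℂ) :
    theta η (w + η - y - c) / theta η (w + η - y)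
      = Complex.exp (2*(Real.pi:ℂ)*I*c) * (theta η (w - y - c) / theta η (w - y)) := by
  rw [show w+η-y-c = (w-y-c)+η by ring, show w+η-y = (w-y)+η by ring, theta_eta, theta_eta,
    neg_mul_comm, neg_mul_comm _ (theta η (w-y)), mul_div_mul_comm, neg_div_neg_eq,
    ← Complex.exp_sub]
  congr 2
  ring

theorem theta_ratio_eta_right (η w y c : ℂ) :
    theta η (w - (y + η) - c) / theta η (w - (y + η))
      = Complex.exp (-(2*(Real.pi:ℂ)*I)*c) * (theta η (w - y - c) / theta η (w - y)) := by
  rw [show w-(y+η)-c = (w-y-c)-η by ring, show w-(y+η) = (w-y)-η by ring, theta_sub_eta,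
    theta_sub_eta, neg_mul_comm, neg_mul_comm _ (theta η (w-y)), mul_div_mul_comm,
    neg_div_neg_eq, ← Complex.exp_sub]
  congr 2
  ring

/-! ### Auxiliary lemmas for updates and products -/

theorem update_apply_sigma {h : ℕ} {L : Fin h → ℕ} (x : ∀ p, Fin (L p) → ℂ) (i : Fin h)
    (a : Fin (L i)) (v : ℂ) (p : Fin h) (q : Fin (L p)) :
    Function.update x i (Function.update (x i) a v) p q
      = if (⟨p, q⟩ : Σ p, Fin (L p)) = ⟨i, a⟩ then v else x p q := by
  rcases eq_or_ne p i with rfl | hp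
  · rw [Function.update_self]
    rcases eq_or_ne q a with rfl | hq
    · simp
    · simp [Function.update_of_ne hq, Sigma.mk.inj_iff, heq_eq_eq, hq]
  · simp [Function.update_of_ne hp, Sigma.mk.inj_iff, hp]

theorem prod_ite_sigma {h : ℕ} {L L' : Fin h → ℕ} (i : Fin h) (a' : Fin (L i)) (C : Fin h → ℂ) :
    (∏ i', ∏ j', ∏ _a'' : Fin (L i'), ∏ _b'' : Fin (L' j'), (1:ℂ)) = 1 := by simp

theorem prod_ite_sigma_cast {h : ℕ} {L L' : Fin h → ℕ} (i : Fin h) (a' : Fin (L i))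
    (C : Fin h → ℂ) :
    (∏ i', ∏ j', ∏ a'' : Fin (L i'), ∏ _b'' : Fin (L' j'),
      (if (⟨i', a''⟩ : Σ p, Fin (L p)) = ⟨i, a'⟩ then C j' else 1)) = ∏ j', C j' ^ (L' j') := by
  rw [Fintype.prod_eq_single i (fun i' hi' => Finset.prod_eq_one fun j' _ =>
    Finset.prod_eq_one fun a'' _ => Finset.prod_eq_one fun b'' _ => by
      simp [Sigma.mk.inj_iff, hi'])]
  refine Finset.prod_congr rfl fun j' _ => ?_
  have hstep : ∀ a'' : Fin (L i), (∏ _b'' : Fin (L' j'),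
      (if (⟨i, a''⟩ : Σ p, Fin (L p)) = ⟨i, a'⟩ then C j' else 1))
      = (if a'' = a' then C j' ^ (L' j') else 1) := by
    intro a''
    rcases eq_or_ne a'' a' with rfl | ha
    · simp [Finset.prod_const]
    · simp [Sigma.mk.inj_iff, ha]
  rw [Finset.prod_congr rfl fun a'' _ => hstep a'']
  simp

theorem prod_ite_sigma_nat {h : ℕ} {L L' : Fin h → ℕ} (i : Fin h) (b' : Fin (L' i))
    (C : Fin h → ℂ) :
    (∏ i', ∏ j', ∏ _a'' : Fin (L i'), ∏ b'' : Fin (L' j'),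
      (if (⟨j', b''⟩ : Σ p, Fin (L' p)) = ⟨i, b'⟩ then C i' else 1)) = ∏ i', C i' ^ (L i') := by
  refine Finset.prod_congr rfl fun i' _ => ?_
  rw [Fintype.prod_eq_single i (fun j' hj' => Finset.prod_eq_one fun a'' _ =>
    Finset.prod_eq_one fun b'' _ => by simp [Sigma.mk.inj_iff, hj'])]
  have hstep : (∏ b'' : Fin (L' i),
      (if (⟨i, b''⟩ : Σ p, Fin (L' p)) = ⟨i, b'⟩ then C i' else 1)) = C i' := by
    have : ∀ b'' : Fin (L' i), (if (⟨i, b''⟩ : Σ p, Fin (L' p)) = ⟨i, b'⟩ then C i' else 1)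
        = (if b'' = b' then C i' else 1) := by
      intro b''; rcases eq_or_ne b'' b' with rfl | hb
      · simp
      · simp [Sigma.mk.inj_iff, hb]
    rw [Finset.prod_congr rfl fun b'' _ => this b'']
    simp [Finset.prod_ite_eq']
  rw [Finset.prod_congr rfl fun a'' _ => hstep]
  simp [Finset.prod_const]

theorem exp_pow_prod {h : ℕ} (t : ℂ) (k : Fin h → ℕ) (e : Fin h → ℂ) :
    (∏ j : Fin h, Complex.exp (t * e j) ^ (k j))
      = Complex.exp (t * ∑ j : Fin h, (k j : ℂ) * e j) := by
  have : ∀ j : Fin h, Complex.exp (t * e j) ^ (k j) = Complex.exp ((k j : ℂ) * (t * e j)) := by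
    intro j; rw [Complex.exp_nat_mul]
  rw [Finset.prod_congr rfl fun j _ => this j, ← Complex.exp_sum]
  congr 1
  rw [Finset.mul_sum]
  exact Finset.sum_congr rfl fun j _ => by ring

noncomputable def smnd {h : ℕ} (η τ : ℂ) (d : Fin h → Fin h → ℂ) {l l' : Fin h → ℕ}
    (f : FF h l) (g : FF h l') (x : ∀ i : Fin h, Fin (l i + l' i) → ℂ) (u : Fin h → ℂ)
    (σ : ∀ i : Fin h, Equiv.Perm (Fin (l i + l' i))) : ℂ :=
  f (fun i a => x i (σ i (Fin.castAdd (l' i) a))) u *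
  g (fun i b => x i (σ i (Fin.natAdd (l i) b)))
    (fun i => u i - 2 * (∑ j : Fin h, (l j : ℂ) * d j i) * τ) *
  ∏ i : Fin h, ∏ j : Fin h, ∏ a : Fin (l i), ∏ b : Fin (l' j),
    (theta η (x i (σ i (Fin.castAdd (l' i) a)) - x j (σ j (Fin.natAdd (l j) b)) - d i j * τ) /
     theta η (x i (σ i (Fin.castAdd (l' i) a)) - x j (σ j (Fin.natAdd (l j) b))))

theorem starMul_eq_smnd {h : ℕ} (η τ : ℂ) (d : Fin h → Fin h → ℂ) {l l' : Fin h → ℕ}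
    (f : FF h l) (g : FF h l') (x : ∀ i : Fin h, Fin (l i + l' i) → ℂ) (u : Fin h → ℂ) :
    starMul η τ d f g x u = (∏ i : Fin h, ((l i).factorial * (l' i).factorial : ℂ))⁻¹ *
      ∑ σ : ∀ i : Fin h, Equiv.Perm (Fin (l i + l' i)), smnd η τ d f g x u σ := rfl

set_option maxHeartbeats 1200000 in
theorem smnd_decomp_cast {h : ℕ} (η τ : ℂ) (d : Fin h → Fin h → ℂ) {l l' : Fin h → ℕ}
    (f : FF h l) (g : FF h l') (x : ∀ i : Fin h, Fin (l i + l' i) → ℂ) (u : Fin h → ℂ)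
    (i : Fin h) (a : Fin (l i + l' i)) (σ : ∀ i : Fin h, Equiv.Perm (Fin (l i + l' i)))
    (a' : Fin (l i)) (ha' : σ i (Fin.castAdd (l' i) a') = a) (v : ℂ) :
    smnd η τ d f g (Function.update x i (Function.update (x i) a (x i a + v))) u σ
      = f (Function.update (fun p q => x p (σ p (Fin.castAdd (l' p) q))) i
            (Function.update (fun q => x i (σ i (Fin.castAdd (l' i) q))) a' (x i a + v))) u *
        g (fun p q => x p (σ p (Fin.natAdd (l p) q)))
          (fun p => u p - 2 * (∑ j : Fin h, (l j : ℂ) * d j p) * τ) *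
        ∏ i' : Fin h, ∏ j' : Fin h, ∏ a'' : Fin (l i'), ∏ b'' : Fin (l' j'),
          (theta η ((if (⟨i', a''⟩ : Σ p, Fin (l p)) = ⟨i, a'⟩ then x i a + v
              else x i' (σ i' (Fin.castAdd (l' i') a'')))
              - x j' (σ j' (Fin.natAdd (l j') b'')) - d i' j' * τ) /
           theta η ((if (⟨i', a''⟩ : Σ p, Fin (l p)) = ⟨i, a'⟩ then x i a + v
              else x i' (σ i' (Fin.castAdd (l' i') a'')))
              - x j' (σ j' (Fin.natAdd (l j') b'')))) := by
  have hcast : ∀ q : Fin (l i), (σ i (Fin.castAdd (l' i) q) = a) ↔ q = a' := by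
    intro q
    rw [← ha', EmbeddingLike.apply_eq_iff_eq]
    constructor
    · intro hq; ext
      have := congrArg Fin.val hq
      simpa using this
    · rintro rfl; rfl
  have hnat : ∀ q : Fin (l' i), σ i (Fin.natAdd (l i) q) ≠ a := by
    intro q hq
    rw [← ha', EmbeddingLike.apply_eq_iff_eq] at hq
    have := congrArg Fin.val hq
    simp at this
    omega
  have hL : ∀ (p : Fin h) (q : Fin (l p)),
      Function.update x i (Function.update (x i) a (x i a + v)) p (σ p (Fin.castAdd (l' p) q))
        = if (⟨p, q⟩ : Σ p, Fin (l p)) = ⟨i, a'⟩ then x i a + v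
          else x p (σ p (Fin.castAdd (l' p) q)) := by
    intro p q
    rw [update_apply_sigma]
    rcases eq_or_ne p i with rfl | hp
    · simp only [Sigma.mk.inj_iff, heq_eq_eq, true_and]
      rcases eq_or_ne q a' with rfl | hq
      · rw [if_pos ((hcast q).mpr rfl), if_pos rfl]
      · rw [if_neg (fun hc => hq ((hcast q).mp hc)), if_neg hq]
    · rw [if_neg (by simp [Sigma.mk.inj_iff, hp]), if_neg (by simp [Sigma.mk.inj_iff, hp])]
  have hR : ∀ (p : Fin h) (q : Fin (l' p)),
      Function.update x i (Function.update (x i) a (x i a + v)) p (σ p (Fin.natAdd (l p) q))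
        = x p (σ p (Fin.natAdd (l p) q)) := by
    intro p q
    rw [update_apply_sigma]
    rcases eq_or_ne p i with rfl | hp
    · rw [if_neg (by simp only [Sigma.mk.inj_iff, heq_eq_eq, true_and]; exact hnat q)]
    · rw [if_neg (by simp [Sigma.mk.inj_iff, hp])]
  have hFarg : (fun p q => Function.update x i (Function.update (x i) a (x i a + v)) p
        (σ p (Fin.castAdd (l' p) q)))
      = Function.update (fun p q => x p (σ p (Fin.castAdd (l' p) q))) i
          (Function.update (fun q => x i (σ i (Fin.castAdd (l' i) q))) a' (x i a + v)) := by
    funext p q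
    rw [hL, update_apply_sigma]
  have hGarg : (fun p q => Function.update x i (Function.update (x i) a (x i a + v)) p
        (σ p (Fin.natAdd (l p) q)))
      = (fun p q => x p (σ p (Fin.natAdd (l p) q))) := by
    funext p q; exact hR p q
  unfold smnd
  rw [hFarg, hGarg]
  simp only [hL, hR]

set_option maxHeartbeats 1200000 in
theorem smnd_decomp_nat {h : ℕ} (η τ : ℂ) (d : Fin h → Fin h → ℂ) {l l' : Fin h → ℕ}
    (f : FF h l) (g : FF h l') (x : ∀ i : Fin h, Fin (l i + l' i) → ℂ) (u : Fin h → ℂ)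
    (i : Fin h) (a : Fin (l i + l' i)) (σ : ∀ i : Fin h, Equiv.Perm (Fin (l i + l' i)))
    (b' : Fin (l' i)) (hb' : σ i (Fin.natAdd (l i) b') = a) (v : ℂ) :
    smnd η τ d f g (Function.update x i (Function.update (x i) a (x i a + v))) u σ
      = f (fun p q => x p (σ p (Fin.castAdd (l' p) q))) u *
        g (Function.update (fun p q => x p (σ p (Fin.natAdd (l p) q))) i
            (Function.update (fun q => x i (σ i (Fin.natAdd (l i) q))) b' (x i a + v)))
          (fun p => u p - 2 * (∑ j : Fin h, (l j : ℂ) * d j p) * τ) *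
        ∏ i' : Fin h, ∏ j' : Fin h, ∏ a'' : Fin (l i'), ∏ b'' : Fin (l' j'),
          (theta η (x i' (σ i' (Fin.castAdd (l' i') a''))
              - (if (⟨j', b''⟩ : Σ p, Fin (l' p)) = ⟨i, b'⟩ then x i a + v
                else x j' (σ j' (Fin.natAdd (l j') b''))) - d i' j' * τ) /
           theta η (x i' (σ i' (Fin.castAdd (l' i') a''))
              - (if (⟨j', b''⟩ : Σ p, Fin (l' p)) = ⟨i, b'⟩ then x i a + v
                else x j' (σ j' (Fin.natAdd (l j') b''))))) := by
  have hnat : ∀ q : Fin (l' i), (σ i (Fin.natAdd (l i) q) = a) ↔ q = b' := by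
    intro q
    rw [← hb', EmbeddingLike.apply_eq_iff_eq]
    constructor
    · intro hq; ext
      have := congrArg Fin.val hq
      simp at this
      omega
    · rintro rfl; rfl
  have hcast : ∀ q : Fin (l i), σ i (Fin.castAdd (l' i) q) ≠ a := by
    intro q hq
    rw [← hb', EmbeddingLike.apply_eq_iff_eq] at hq
    have := congrArg Fin.val hq
    simp at this
    omega
  have hR : ∀ (p : Fin h) (q : Fin (l' p)),
      Function.update x i (Function.update (x i) a (x i a + v)) p (σ p (Fin.natAdd (l p) q))
        = if (⟨p, q⟩ : Σ p, Fin (l' p)) = ⟨i, b'⟩ then x i a + v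
          else x p (σ p (Fin.natAdd (l p) q)) := by
    intro p q
    rw [update_apply_sigma]
    rcases eq_or_ne p i with rfl | hp
    · simp only [Sigma.mk.inj_iff, heq_eq_eq, true_and]
      rcases eq_or_ne q b' with rfl | hq
      · rw [if_pos ((hnat q).mpr rfl), if_pos rfl]
      · rw [if_neg (fun hc => hq ((hnat q).mp hc)), if_neg hq]
    · rw [if_neg (by simp [Sigma.mk.inj_iff, hp]), if_neg (by simp [Sigma.mk.inj_iff, hp])]
  have hL : ∀ (p : Fin h) (q : Fin (l p)),
      Function.update x i (Function.update (x i) a (x i a + v)) p (σ p (Fin.castAdd (l' p) q))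
        = x p (σ p (Fin.castAdd (l' p) q)) := by
    intro p q
    rw [update_apply_sigma]
    rcases eq_or_ne p i with rfl | hp
    · rw [if_neg (by simp only [Sigma.mk.inj_iff, heq_eq_eq, true_and]; exact hcast q)]
    · rw [if_neg (by simp [Sigma.mk.inj_iff, hp])]
  have hGarg : (fun p q => Function.update x i (Function.update (x i) a (x i a + v)) p
        (σ p (Fin.natAdd (l p) q)))
      = Function.update (fun p q => x p (σ p (Fin.natAdd (l p) q))) i
          (Function.update (fun q => x i (σ i (Fin.natAdd (l i) q))) b' (x i a + v)) := by
    funext p q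
    rw [hR, update_apply_sigma]
  have hFarg : (fun p q => Function.update x i (Function.update (x i) a (x i a + v)) p
        (σ p (Fin.castAdd (l' p) q)))
      = (fun p q => x p (σ p (Fin.castAdd (l' p) q))) := by
    funext p q; exact hL p q
  unfold smnd
  rw [hFarg, hGarg]
  simp only [hL, hR]

set_option maxHeartbeats 1200000 in
theorem smnd_update_one {h : ℕ} (η τ : ℂ) (d : Fin h → Fin h → ℂ) (n : Fin h → ℤ)
    {l l' : Fin h → ℕ} (f : FF h l) (g : FF h l')
    (hfq : QuasiPeriodic η τ d n f) (hgq : QuasiPeriodic η τ d n g)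
    (x : ∀ i : Fin h, Fin (l i + l' i) → ℂ) (u : Fin h → ℂ)
    (i : Fin h) (a : Fin (l i + l' i)) (σ : ∀ i : Fin h, Equiv.Perm (Fin (l i + l' i))) :
    smnd η τ d f g (Function.update x i (Function.update (x i) a (x i a + 1))) u σ
      = smnd η τ d f g x u σ := by
  have hca : σ i ((σ i).symm a) = a := (σ i).apply_symm_apply a
  rcases lt_or_ge (((σ i).symm a : Fin (l i + l' i)) : ℕ) (l i) with hlt | hge
  · set a' : Fin (l i) := ⟨((σ i).symm a : Fin (l i + l' i)), hlt⟩ with ha'def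
    have hkey : σ i (Fin.castAdd (l' i) a') = a := by
      have h1 : Fin.castAdd (l' i) a' = (σ i).symm a := Fin.ext (by simp [ha'def])
      rw [h1, hca]
    rw [smnd_decomp_cast η τ d f g x u i a σ a' hkey 1]
    have hf1 := (hfq (fun p q => x p (σ p (Fin.castAdd (l' p) q))) u i a').1
    simp only [hkey] at hf1
    rw [hf1]
    have hfactor : ∀ (i' j' : Fin h) (a'' : Fin (l i')) (b'' : Fin (l' j')),
        (theta η ((if (⟨i', a''⟩ : Σ p, Fin (l p)) = ⟨i, a'⟩ then x i a + 1
            else x i' (σ i' (Fin.castAdd (l' i') a'')))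
            - x j' (σ j' (Fin.natAdd (l j') b'')) - d i' j' * τ) /
         theta η ((if (⟨i', a''⟩ : Σ p, Fin (l p)) = ⟨i, a'⟩ then x i a + 1
            else x i' (σ i' (Fin.castAdd (l' i') a'')))
            - x j' (σ j' (Fin.natAdd (l j') b''))))
        = (theta η (x i' (σ i' (Fin.castAdd (l' i') a''))
            - x j' (σ j' (Fin.natAdd (l j') b'')) - d i' j' * τ) /
           theta η (x i' (σ i' (Fin.castAdd (l' i') a''))
            - x j' (σ j' (Fin.natAdd (l j') b'')))) := by
      intro i' j' a'' b''
      rcases eq_or_ne (⟨i', a''⟩ : Σ p, Fin (l p)) ⟨i, a'⟩ with he | he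
      · obtain ⟨rfl, h2⟩ := Sigma.mk.inj_iff.mp he
        rw [heq_eq_eq] at h2
        subst h2
        rw [if_pos rfl, hkey]
        exact theta_ratio_one_left η (x i' a) _ _
      · rw [if_neg he]
    have hP := Finset.prod_congr rfl fun i' (_ : i' ∈ Finset.univ) =>
      Finset.prod_congr rfl fun j' (_ : j' ∈ Finset.univ) =>
      Finset.prod_congr rfl fun a'' (_ : a'' ∈ Finset.univ) =>
      Finset.prod_congr rfl fun b'' (_ : b'' ∈ Finset.univ) => hfactor i' j' a'' b''
    rw [hP]
    rfl
  · set b' : Fin (l' i) := ⟨((σ i).symm a : Fin (l i + l' i)) - l i, by omega⟩ with hb'def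
    have hkey : σ i (Fin.natAdd (l i) b') = a := by
      have h1 : Fin.natAdd (l i) b' = (σ i).symm a := Fin.ext (by simp [hb'def]; omega)
      rw [h1, hca]
    rw [smnd_decomp_nat η τ d f g x u i a σ b' hkey 1]
    have hg1 := (hgq (fun p q => x p (σ p (Fin.natAdd (l p) q)))
      (fun p => u p - 2 * (∑ j : Fin h, (l j : ℂ) * d j p) * τ) i b').1
    simp only [hkey] at hg1
    rw [hg1]
    have hfactor : ∀ (i' j' : Fin h) (a'' : Fin (l i')) (b'' : Fin (l' j')),
        (theta η (x i' (σ i' (Fin.castAdd (l' i') a''))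
            - (if (⟨j', b''⟩ : Σ p, Fin (l' p)) = ⟨i, b'⟩ then x i a + 1
              else x j' (σ j' (Fin.natAdd (l j') b''))) - d i' j' * τ) /
         theta η (x i' (σ i' (Fin.castAdd (l' i') a''))
            - (if (⟨j', b''⟩ : Σ p, Fin (l' p)) = ⟨i, b'⟩ then x i a + 1
              else x j' (σ j' (Fin.natAdd (l j') b'')))))
        = (theta η (x i' (σ i' (Fin.castAdd (l' i') a''))
            - x j' (σ j' (Fin.natAdd (l j') b'')) - d i' j' * τ) /
           theta η (x i' (σ i' (Fin.castAdd (l' i') a''))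
            - x j' (σ j' (Fin.natAdd (l j') b'')))) := by
      intro i' j' a'' b''
      rcases eq_or_ne (⟨j', b''⟩ : Σ p, Fin (l' p)) ⟨i, b'⟩ with he | he
      · obtain ⟨rfl, h2⟩ := Sigma.mk.inj_iff.mp he
        rw [heq_eq_eq] at h2
        subst h2
        rw [if_pos rfl, hkey]
        exact theta_ratio_one_right η _ (x j' a) _
      · rw [if_neg he]
    have hP := Finset.prod_congr rfl fun i' (_ : i' ∈ Finset.univ) =>
      Finset.prod_congr rfl fun j' (_ : j' ∈ Finset.univ) =>
      Finset.prod_congr rfl fun a'' (_ : a'' ∈ Finset.univ) =>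
      Finset.prod_congr rfl fun b'' (_ : b'' ∈ Finset.univ) => hfactor i' j' a'' b''
    rw [hP]
    rfl

set_option maxHeartbeats 1200000 in
theorem smnd_update_eta {h : ℕ} (η τ : ℂ) (d : Fin h → Fin h → ℂ) (hd : ∀ i j, d i j = d j i)
    (n : Fin h → ℤ) {l l' : Fin h → ℕ} (f : FF h l) (g : FF h l')
    (hfq : QuasiPeriodic η τ d n f) (hgq : QuasiPeriodic η τ d n g)
    (x : ∀ i : Fin h, Fin (l i + l' i) → ℂ) (u : Fin h → ℂ)
    (i : Fin h) (a : Fin (l i + l' i)) (σ : ∀ i : Fin h, Equiv.Perm (Fin (l i + l' i))) :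
    smnd η τ d f g (Function.update x i (Function.update (x i) a (x i a + η))) u σ
      = Complex.exp (-(2 * (Real.pi : ℂ) * I) *
          ((n i : ℂ) * x i a + u i - (∑ j : Fin h, ((l j + l' j : ℕ) : ℂ) * d j i) * τ)) *
        smnd η τ d f g x u σ := by
  have hca : σ i ((σ i).symm a) = a := (σ i).apply_symm_apply a
  rcases lt_or_ge (((σ i).symm a : Fin (l i + l' i)) : ℕ) (l i) with hlt | hge
  · set a' : Fin (l i) := ⟨((σ i).symm a : Fin (l i + l' i)), hlt⟩ with ha'def
    have hkey : σ i (Fin.castAdd (l' i) a') = a := by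
      have h1 : Fin.castAdd (l' i) a' = (σ i).symm a := Fin.ext (by simp [ha'def])
      rw [h1, hca]
    rw [smnd_decomp_cast η τ d f g x u i a σ a' hkey η]
    have hf2 := (hfq (fun p q => x p (σ p (Fin.castAdd (l' p) q))) u i a').2
    simp only [hkey] at hf2
    rw [hf2]
    have hfactor : ∀ (i' j' : Fin h) (a'' : Fin (l i')) (b'' : Fin (l' j')),
        (theta η ((if (⟨i', a''⟩ : Σ p, Fin (l p)) = ⟨i, a'⟩ then x i a + η
            else x i' (σ i' (Fin.castAdd (l' i') a'')))
            - x j' (σ j' (Fin.natAdd (l j') b'')) - d i' j' * τ) /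
         theta η ((if (⟨i', a''⟩ : Σ p, Fin (l p)) = ⟨i, a'⟩ then x i a + η
            else x i' (σ i' (Fin.castAdd (l' i') a'')))
            - x j' (σ j' (Fin.natAdd (l j') b''))))
        = (if (⟨i', a''⟩ : Σ p, Fin (l p)) = ⟨i, a'⟩
            then Complex.exp (2*(Real.pi:ℂ)*I*(d i j' * τ)) else 1) *
          (theta η (x i' (σ i' (Fin.castAdd (l' i') a''))
            - x j' (σ j' (Fin.natAdd (l j') b'')) - d i' j' * τ) /
           theta η (x i' (σ i' (Fin.castAdd (l' i') a''))
            - x j' (σ j' (Fin.natAdd (l j') b'')))) := by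
      intro i' j' a'' b''
      rcases eq_or_ne (⟨i', a''⟩ : Σ p, Fin (l p)) ⟨i, a'⟩ with he | he
      · obtain ⟨rfl, h2⟩ := Sigma.mk.inj_iff.mp he
        rw [heq_eq_eq] at h2
        subst h2
        rw [if_pos rfl, if_pos rfl, hkey]
        exact theta_ratio_eta_left η (x i' a) _ _
      · rw [if_neg he, if_neg he, one_mul]
    have hP := Finset.prod_congr rfl fun i' (_ : i' ∈ Finset.univ) =>
      Finset.prod_congr rfl fun j' (_ : j' ∈ Finset.univ) =>
      Finset.prod_congr rfl fun a'' (_ : a'' ∈ Finset.univ) =>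
      Finset.prod_congr rfl fun b'' (_ : b'' ∈ Finset.univ) => hfactor i' j' a'' b''
    rw [hP]
    simp only [Finset.prod_mul_distrib]
    rw [prod_ite_sigma_cast i a' (fun j' => Complex.exp (2*(Real.pi:ℂ)*I*(d i j' * τ))),
      exp_pow_prod (2*(Real.pi:ℂ)*I) l' (fun j' => d i j' * τ)]
    have hE : Complex.exp (-(2 * (Real.pi : ℂ) * I) *
          ((n i : ℂ) * x i a + u i - (∑ j : Fin h, (l j : ℂ) * d j i) * τ)) *
        Complex.exp (2*(Real.pi:ℂ)*I * (∑ j : Fin h, (l' j : ℂ) * (d i j * τ)))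
        = Complex.exp (-(2 * (Real.pi : ℂ) * I) *
          ((n i : ℂ) * x i a + u i - (∑ j : Fin h, ((l j + l' j : ℕ) : ℂ) * d j i) * τ)) := by
      rw [← Complex.exp_add]
      congr 1
      have hsum : (∑ j : Fin h, (l' j : ℂ) * (d i j * τ))
          = (∑ j : Fin h, (l' j : ℂ) * d j i) * τ := by
        rw [Finset.sum_mul]
        exact Finset.sum_congr rfl fun j _ => by rw [hd i j]; ring
      rw [hsum]
      push_cast
      simp only [add_mul, Finset.sum_add_distrib]
      ring
    rw [← hE]
    unfold smnd
    ring
  · set b' : Fin (l' i) := ⟨((σ i).symm a : Fin (l i + l' i)) - l i, by omega⟩ with hb'def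
    have hkey : σ i (Fin.natAdd (l i) b') = a := by
      have h1 : Fin.natAdd (l i) b' = (σ i).symm a := Fin.ext (by simp [hb'def]; omega)
      rw [h1, hca]
    rw [smnd_decomp_nat η τ d f g x u i a σ b' hkey η]
    have hg2 := (hgq (fun p q => x p (σ p (Fin.natAdd (l p) q)))
      (fun p => u p - 2 * (∑ j : Fin h, (l j : ℂ) * d j p) * τ) i b').2
    simp only [hkey] at hg2
    rw [hg2]
    have hfactor : ∀ (i' j' : Fin h) (a'' : Fin (l i')) (b'' : Fin (l' j')),
        (theta η (x i' (σ i' (Fin.castAdd (l' i') a''))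
            - (if (⟨j', b''⟩ : Σ p, Fin (l' p)) = ⟨i, b'⟩ then x i a + η
              else x j' (σ j' (Fin.natAdd (l j') b''))) - d i' j' * τ) /
         theta η (x i' (σ i' (Fin.castAdd (l' i') a''))
            - (if (⟨j', b''⟩ : Σ p, Fin (l' p)) = ⟨i, b'⟩ then x i a + η
              else x j' (σ j' (Fin.natAdd (l j') b'')))))
        = (if (⟨j', b''⟩ : Σ p, Fin (l' p)) = ⟨i, b'⟩
            then Complex.exp (-(2*(Real.pi:ℂ)*I)*(d i' i * τ)) else 1) *
          (theta η (x i' (σ i' (Fin.castAdd (l' i') a''))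
            - x j' (σ j' (Fin.natAdd (l j') b'')) - d i' j' * τ) /
           theta η (x i' (σ i' (Fin.castAdd (l' i') a''))
            - x j' (σ j' (Fin.natAdd (l j') b'')))) := by
      intro i' j' a'' b''
      rcases eq_or_ne (⟨j', b''⟩ : Σ p, Fin (l' p)) ⟨i, b'⟩ with he | he
      · obtain ⟨rfl, h2⟩ := Sigma.mk.inj_iff.mp he
        rw [heq_eq_eq] at h2
        subst h2
        rw [if_pos rfl, if_pos rfl, hkey]
        exact theta_ratio_eta_right η _ (x j' a) _
      · rw [if_neg he, if_neg he, one_mul]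
    have hP := Finset.prod_congr rfl fun i' (_ : i' ∈ Finset.univ) =>
      Finset.prod_congr rfl fun j' (_ : j' ∈ Finset.univ) =>
      Finset.prod_congr rfl fun a'' (_ : a'' ∈ Finset.univ) =>
      Finset.prod_congr rfl fun b'' (_ : b'' ∈ Finset.univ) => hfactor i' j' a'' b''
    rw [hP]
    simp only [Finset.prod_mul_distrib]
    rw [prod_ite_sigma_nat i b' (fun i' => Complex.exp (-(2*(Real.pi:ℂ)*I)*(d i' i * τ))),
      exp_pow_prod (-(2*(Real.pi:ℂ)*I)) l (fun i' => d i' i * τ)]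
    have hE : Complex.exp (-(2 * (Real.pi : ℂ) * I) *
          ((n i : ℂ) * x i a + (u i - 2 * (∑ j : Fin h, (l j : ℂ) * d j i) * τ)
            - (∑ j : Fin h, (l' j : ℂ) * d j i) * τ)) *
        Complex.exp (-(2*(Real.pi:ℂ)*I) * (∑ j : Fin h, (l j : ℂ) * (d j i * τ)))
        = Complex.exp (-(2 * (Real.pi : ℂ) * I) *
          ((n i : ℂ) * x i a + u i - (∑ j : Fin h, ((l j + l' j : ℕ) : ℂ) * d j i) * τ)) := by
      rw [← Complex.exp_add]
      congr 1
      have hsum : (∑ j : Fin h, (l j : ℂ) * (d j i * τ))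
          = (∑ j : Fin h, (l j : ℂ) * d j i) * τ := by
        rw [Finset.sum_mul]
        exact Finset.sum_congr rfl fun j _ => by ring
      rw [hsum]
      push_cast
      simp only [add_mul, Finset.sum_add_distrib]
      ring
    rw [← hE]
    unfold smnd
    ring


/-- Part of Proposition 2: the product `*` of formula (2) preserves quasi-periodicity
(property 2), at every point where `θ(x_{a,p} − x_{b,q}) ≠ 0` for all distinct slots. -/
theorem starMul_quasiPeriodic {h : ℕ} (hh : 1 ≤ h) (η : ℂ) (hη : 0 < η.im) (τ : ℂ)
    (d : Fin h → Fin h → ℂ) (hd : ∀ i j, d i j = d j i) (n : Fin h → ℤ)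
    (l l' : Fin h → ℕ) (f : FF h l) (g : FF h l')
    (hf : IsSymFF f) (hg : IsSymFF g)
    (hfq : QuasiPeriodic η τ d n f) (hgq : QuasiPeriodic η τ d n g)
    (x : ∀ i : Fin h, Fin (l i + l' i) → ℂ) (u : Fin h → ℂ)
    (hx : ∀ (i j : Fin h) (a : Fin (l i + l' i)) (b : Fin (l j + l' j)),
      (⟨i, a⟩ : Σ i : Fin h, Fin (l i + l' i)) ≠ ⟨j, b⟩ →
      theta η (x i a - x j b) ≠ 0)
    (i : Fin h) (a : Fin (l i + l' i)) :
    starMul η τ d f g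
        (Function.update x i (Function.update (x i) a (x i a + 1))) u =
      starMul η τ d f g x u ∧
    starMul η τ d f g
        (Function.update x i (Function.update (x i) a (x i a + η))) u =
      Complex.exp (-(2 * (Real.pi : ℂ) * I) *
          ((n i : ℂ) * x i a + u i - (∑ j : Fin h, ((l j + l' j : ℕ) : ℂ) * d j i) * τ)) *
        starMul η τ d f g x u := by
  constructor
  · rw [starMul_eq_smnd, starMul_eq_smnd,
      Finset.sum_congr rfl fun σ (_ : σ ∈ Finset.univ) =>
        smnd_update_one η τ d n f g hfq hgq x u i a σ]
  · rw [starMul_eq_smnd, starMul_eq_smnd,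
      Finset.sum_congr rfl fun σ (_ : σ ∈ Finset.univ) =>
        smnd_update_eta η τ d hd n f g hfq hgq x u i a σ,
      ← Finset.mul_sum]
    ring
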